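/- In the rank-2 Hermitian setting, for P = a₁H_{ε₁} + a₂H_{ε₂} ∈ a, one has [J(P), μ(P)] = -2‖H_{ε₁}‖⁴(a₁³H_{ε₁} + a₂³H_{ε₂}), and hence ‖[J(P), μ(P)]‖² = 4(a₁⁶ + a₂⁶)‖H_{ε₁}‖¹⁰. -/
import Mathlib


/-- In the rank-two Hermitian setting, for `P = a₁H_{ε₁} + a₂H_{ε₂} ∈ a` one has
`[J(P), μ(P)] = -2‖H_{ε₁}‖⁴(a₁³H_{ε₁} + a₂³H_{ε₂})` and hence
`‖[J(P), μ(P)]‖² = 4(a₁⁶ + a₂⁶)‖H_{ε₁}‖¹⁰`, with respect to `⟨X,Y⟩ = -B(X,Y)`. -/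
theorem lie_JP_muP_formula
    {g : Type*} [LieRing g] [LieAlgebra ℝ g] [Module.Finite ℝ g]
    (H1 H2 Z1 Z2 : g) (c a1 a2 : ℝ)
    (hc1 : -(killingForm ℝ g H1 H1) = c)
    (hc2 : -(killingForm ℝ g H2 H2) = c)
    (horth : killingForm ℝ g H1 H2 = 0)
    (had1 : ⁅Z1, ⁅Z1, H1⁆⁆ = -H1)
    (had2 : ⁅Z2, ⁅Z2, H2⁆⁆ = -H2)
    (hcross1 : ⁅⁅Z1, H1⁆, Z2⁆ = 0)
    (hcross2 : ⁅⁅Z2, H2⁆, Z1⁆ = 0)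
    (JP μP : g)
    (hJP : JP = a1 • ⁅Z1, H1⁆ + a2 • ⁅Z2, H2⁆)
    (hμP : μP = (-2 * c ^ 2) • (a1 ^ 2 • Z1 + a2 ^ 2 • Z2)) :
    ⁅JP, μP⁆ = (-2 * c ^ 2) • (a1 ^ 3 • H1 + a2 ^ 3 • H2) ∧
    -(killingForm ℝ g ⁅JP, μP⁆ ⁅JP, μP⁆) = 4 * (a1 ^ 6 + a2 ^ 6) * c ^ 5 := by
  have h11 : ⁅⁅Z1, H1⁆, Z1⁆ = H1 := by
    rw [← lie_skew, had1]; simp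
  have h22 : ⁅⁅Z2, H2⁆, Z2⁆ = H2 := by
    rw [← lie_skew, had2]; simp
  have h1 : ⁅JP, μP⁆ = (-2 * c ^ 2) • (a1 ^ 3 • H1 + a2 ^ 3 • H2) := by
    rw [hJP, hμP]
    simp only [lie_smul, lie_add, add_lie, smul_lie, h11, h22, hcross1, hcross2,
      smul_zero, add_zero, zero_add, smul_smul]
    module
  refine ⟨h1, ?_⟩
  have hsymm : killingForm ℝ g H2 H1 = 0 := by
    rw [LieModule.traceForm_comm]; exact horth
  rw [h1]
  simp only [map_smul, map_add, LinearMap.smul_apply, LinearMap.add_apply, smul_eq_mul]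
  have e1 : killingForm ℝ g H1 H1 = -c := by linarith
  have e2 : killingForm ℝ g H2 H2 = -c := by linarith
  rw [e1, e2, horth, hsymm]
  ring
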